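/- The vectors 𝒱₁ = (αη/l, 0, β)ᵀ, 𝒱₂ = (i(1−β), h/√p₀, iαη/l)ᵀ and 𝒱₃ = (i(β−1), h/√p₀, −iαη/l)ᵀ satisfy (λᵢ·I − 𝒜)·𝒱ᵢ = 0 for i = 1, 2, 3; that is, 𝒱ᵢ is an eigenvector of 𝒜 for the eigenvalue λᵢ. -/

import Mathlib

set_option maxHeartbeats 1000000 in
/-- The vectors `𝒱₁ = (αη/l, 0, β)`, `𝒱₂ = (i(1−β), h/√p₀, iαη/l)`,
`𝒱₃ = (i(β−1), h/√p₀, −iαη/l)` are eigenvectors of the symbol matrix `𝒜` of the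
linearized simple-zero-mode system for the eigenvalues `λ₁, λ₂, λ₃`:
`(λᵢ·I − 𝒜)·𝒱ᵢ = 0` for `i = 1, 2, 3`. -/
theorem stmt_2 (ν α β : ℝ) (hν : 0 < ν) (hα : 0 < α) (hB : 0 < β * (β - 1))
    (η : ℝ) (l : ℤ) (hl : l ≠ 0)
    (p₀ h : ℝ)
    (hp₀ : p₀ = η ^ 2 + (l : ℝ) ^ 2)
    (hh : h = Real.sqrt (α ^ 2 * η ^ 2 + β * (β - 1) * (l : ℝ) ^ 2))
    (A : Matrix (Fin 3) (Fin 3) ℂ)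
    (hA : A = !![((-(ν * p₀) : ℝ) : ℂ), ((β - 1 : ℝ) : ℂ), 0;
                 ((-(β * (l : ℝ) ^ 2 / p₀) : ℝ) : ℂ), ((-(ν * p₀) : ℝ) : ℂ),
                   ((α * η * (l : ℝ) / p₀ : ℝ) : ℂ);
                 0, ((-(α * η / (l : ℝ)) : ℝ) : ℂ), ((-(ν * p₀) : ℝ) : ℂ)])
    (lam₁ lam₂ lam₃ : ℂ)
    (hlam₁ : lam₁ = ((-(ν * p₀) : ℝ) : ℂ))
    (hlam₂ : lam₂ = ((-(ν * p₀) : ℝ) : ℂ) + Complex.I * ((h / Real.sqrt p₀ : ℝ) : ℂ))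
    (hlam₃ : lam₃ = ((-(ν * p₀) : ℝ) : ℂ) - Complex.I * ((h / Real.sqrt p₀ : ℝ) : ℂ))
    (V₁ V₂ V₃ : Fin 3 → ℂ)
    (hV₁ : V₁ = ![((α * η / (l : ℝ) : ℝ) : ℂ), 0, ((β : ℝ) : ℂ)])
    (hV₂ : V₂ = ![Complex.I * ((1 - β : ℝ) : ℂ), ((h / Real.sqrt p₀ : ℝ) : ℂ),
                  Complex.I * ((α * η / (l : ℝ) : ℝ) : ℂ)])
    (hV₃ : V₃ = ![Complex.I * ((β - 1 : ℝ) : ℂ), ((h / Real.sqrt p₀ : ℝ) : ℂ),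
                  -(Complex.I * ((α * η / (l : ℝ) : ℝ) : ℂ))]) :
    (lam₁ • (1 : Matrix (Fin 3) (Fin 3) ℂ) - A).mulVec V₁ = 0 ∧
    (lam₂ • (1 : Matrix (Fin 3) (Fin 3) ℂ) - A).mulVec V₂ = 0 ∧
    (lam₃ • (1 : Matrix (Fin 3) (Fin 3) ℂ) - A).mulVec V₃ = 0 := by
  have hl' : ((l:ℝ)) ≠ 0 := Int.cast_ne_zero.mpr hl
  have hp : (0:ℝ) < p₀ := by rw [hp₀]; positivity
  have hsp : Real.sqrt p₀ ≠ 0 := by positivity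
  have hsp2 : Real.sqrt p₀ ^ 2 = p₀ := Real.sq_sqrt hp.le
  have hh2 : h ^ 2 = α ^ 2 * η ^ 2 + β * (β - 1) * (l:ℝ) ^ 2 := by
    rw [hh]; exact Real.sq_sqrt (by positivity)
  have hpC : ((p₀:ℝ):ℂ) ≠ 0 := by exact_mod_cast hp.ne'
  have hlC : (((l:ℝ)):ℂ) ≠ 0 := by exact_mod_cast hl'
  have hlC2 : ((l:ℤ):ℂ) ≠ 0 := Int.cast_ne_zero.mpr hl
  have hspC : ((Real.sqrt p₀ : ℝ):ℂ) ≠ 0 := by exact_mod_cast hsp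
  have hsp2C : ((Real.sqrt p₀ : ℝ):ℂ) ^ 2 = ((p₀:ℝ):ℂ) := by exact_mod_cast hsp2
  have hh2C := congrArg (Complex.ofReal ·) hh2
  push_cast at hh2C
  subst hA hlam₁ hlam₂ hlam₃ hV₁ hV₂ hV₃
  refine ⟨?_, ?_, ?_⟩ <;> funext i <;> fin_cases i <;>
    simp only [Matrix.mulVec, dotProduct, Fin.sum_univ_three, Matrix.sub_apply,
      Matrix.smul_apply, Matrix.one_fin_three, Matrix.cons_val',
      Matrix.cons_val_zero, Matrix.cons_val_one, Matrix.head_cons, Matrix.head_fin_const,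
      Matrix.empty_val', Matrix.cons_val_fin_one, Matrix.of_apply, Pi.zero_apply,
      smul_eq_mul, Fin.isValue, Matrix.cons_val_two, Matrix.tail_cons] <;>
    push_cast
  all_goals try simp [Matrix.vecHead, Matrix.vecTail]
  all_goals try (field_simp [hpC, hlC, hlC2, hspC]; try ring)
  all_goals
    first
    | linear_combination ((h:ℂ) * (1 - (β:ℂ))) * Complex.I_sq
    | linear_combination ((α:ℂ) * (η:ℂ) * (h:ℂ) * ((Real.sqrt p₀ : ℝ):ℂ) * ((l:ℤ):ℂ)) * Complex.I_sq
    | linear_combination ((β:ℂ) * ((l:ℤ):ℂ) ^ 3 * Complex.I * (p₀:ℂ) - (β:ℂ) ^ 2 * ((l:ℤ):ℂ) ^ 3 * Complex.I * (p₀:ℂ) - ((l:ℤ):ℂ) * Complex.I * (p₀:ℂ) * (α:ℂ) ^ 2 * (η:ℂ) ^ 2) * hsp2C + (((l:ℤ):ℂ) * Complex.I * (p₀:ℂ) ^ 2) * hh2C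
    | linear_combination (-((β:ℂ) * ((l:ℤ):ℂ) ^ 3 * Complex.I * (p₀:ℂ)) + (β:ℂ) ^ 2 * ((l:ℤ):ℂ) ^ 3 * Complex.I * (p₀:ℂ) + ((l:ℤ):ℂ) * Complex.I * (p₀:ℂ) * (α:ℂ) ^ 2 * (η:ℂ) ^ 2) * hsp2C + (-(((l:ℤ):ℂ) * Complex.I * (p₀:ℂ) ^ 2)) * hh2C
    | linear_combination ((α:ℂ) * (η:ℂ) * (h:ℂ)) * Complex.I_sq
    | linear_combination (Complex.I * ((β:ℂ) * ((l:ℤ):ℂ) ^ 2 - (β:ℂ) ^ 2 * ((l:ℤ):ℂ) ^ 2 - (α:ℂ) ^ 2 * (η:ℂ) ^ 2)) * hsp2C + (Complex.I * (p₀:ℂ)) * hh2C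
    | linear_combination (-(Complex.I * ((β:ℂ) * ((l:ℤ):ℂ) ^ 2 - (β:ℂ) ^ 2 * ((l:ℤ):ℂ) ^ 2 - (α:ℂ) ^ 2 * (η:ℂ) ^ 2))) * hsp2C + (-(Complex.I * (p₀:ℂ))) * hh2C
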